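/- Let λ₁, λ₂ > 0, let W have the Skellam(λ₁,λ₂) distribution, let x ∈ ℝ, and write I_k for I_k(2√(λ₁λ₂)). If f : ℤ → ℝ is a bounded solution of λ₁ f(k+1) − k f(k) − λ₂ f(k−1) = 1{k ≤ x} − P(W ≤ x) for all k ∈ ℤ, then for every c ∈ ℤ and every m ∈ ℤ: if m > c, f(m) = (−1)^m (√(λ₂/λ₁))^m I_m [ (−1)^c (√(λ₁/λ₂))^c f(c)/I_c + (e^{λ₁+λ₂}/√(λ₁λ₂)) Σ_{n=c}^{m−1} ((−1)^{n+1}/(I_n I_{n+1})) P(W ≤ min{n,x}) P(W > max{n,x}) ], and if m < c, f(m) = (−1)^m (√(λ₂/λ₁))^m I_m [ (−1)^c (√(λ₁/λ₂))^c f(c)/I_c − (e^{λ₁+λ₂}/√(λ₁λ₂)) Σ_{n=m}^{c−1} ((−1)^{n+1}/(I_n I_{n+1})) P(W ≤ min{n,x}) P(W > max{n,x}) ]. -/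

import Mathlib

open MeasureTheory ProbabilityTheory Real

/-- The Skellam distribution: law of `X - Y` for `X, Y` independent Poisson random
variables with rates `l1` and `l2`. -/
noncomputable def skellamMeasure (l1 l2 : ℝ) : Measure ℤ :=
  ((poissonMeasure l1.toNNReal).prod (poissonMeasure l2.toNNReal)).map
    (fun p => (p.1 : ℤ) - (p.2 : ℤ))

/-- Kolmogorov–Smirnov distance between two real random variables on `Ω`. -/
noncomputable def dKS {Ω : Type*} [MeasurableSpace Ω] (μ : Measure Ω) (X Z : Ω → ℝ) : ℝ :=
  ⨆ x : ℝ, |(μ {ω | X ω ≤ x}).toReal - (μ {ω | Z ω ≤ x}).toReal|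

/-- Kolmogorov–Smirnov distance between two distributions on `ℤ`. -/
noncomputable def dKSZ (μ1 μ2 : Measure ℤ) : ℝ :=
  ⨆ x : ℝ, |(μ1 {k : ℤ | (k : ℝ) ≤ x}).toReal - (μ2 {k : ℤ | (k : ℝ) ≤ x}).toReal|

/-- Kolmogorov–Smirnov distance between two distributions on `ℝ`. -/
noncomputable def dKSR (μ1 μ2 : Measure ℝ) : ℝ :=
  ⨆ x : ℝ, |(μ1 {y : ℝ | y ≤ x}).toReal - (μ2 {y : ℝ | y ≤ x}).toReal|

/-- Modified Bessel function of the first kind, of integer order `k`. -/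
noncomputable def besselI (k : ℤ) (z : ℝ) : ℝ :=
  ∑' j : ℕ, (z / 2) ^ (2 * j + k.natAbs) /
    ((Nat.factorial j : ℝ) * (Nat.factorial (j + k.natAbs) : ℝ))

open Filter Topology
open scoped NNReal ENNReal

instance skProb (l1 l2 : ℝ) : IsProbabilityMeasure (skellamMeasure l1 l2) := by
  unfold skellamMeasure
  exact Measure.isProbabilityMeasure_map (measurable_of_countable _).aemeasurable

lemma sk_singleton (l1 l2 : ℝ) (n : ℤ) :
    skellamMeasure l1 l2 {n} = ∑' j : ℕ,
      (poissonMeasure l1.toNNReal {j + n.toNat} * poissonMeasure l2.toNNReal {j + (-n).toNat}) := by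
  unfold skellamMeasure
  rw [Measure.map_apply (measurable_of_countable _) (measurableSet_singleton n)]
  have hA : (fun p : ℕ × ℕ => (p.1 : ℤ) - (p.2 : ℤ)) ⁻¹' {n} =
      ⋃ j : ℕ, {((j + n.toNat : ℕ), (j + (-n).toNat : ℕ))} := by
    ext ⟨a, b⟩
    simp only [Set.mem_preimage, Set.mem_singleton_iff, Set.mem_iUnion, Prod.mk.injEq,
      Prod.ext_iff]
    constructor
    · intro h; exact ⟨min a b, by omega, by omega⟩
    · rintro ⟨j, rfl, rfl⟩; push_cast; omega
  rw [hA, measure_iUnion ?_ (fun j => measurableSet_singleton _)]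
  · congr 1; ext j
    rw [show ({((j + n.toNat : ℕ), (j + (-n).toNat : ℕ))} : Set (ℕ × ℕ)) =
      {(j + n.toNat : ℕ)} ×ˢ {(j + (-n).toNat : ℕ)} by simp, Measure.prod_prod]
  · intro i j hij
    simp only [Set.disjoint_singleton, ne_eq, Prod.mk.injEq, not_and]
    omega

/-- real pmf of Skellam -/
noncomputable def skp (l1 l2 : ℝ) (n : ℤ) : ℝ := (skellamMeasure l1 l2 {n}).toReal

/-- joint Poisson weight -/
noncomputable def skQ (l1 l2 : ℝ) (a b : ℕ) : ℝ :=
  rexp (-(l1 + l2)) * (l1 ^ a * l2 ^ b) / (a.factorial * b.factorial)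

lemma poisson_sing (r : ℝ≥0) (a : ℕ) :
    poissonMeasure r {a} = ENNReal.ofReal (poissonPMFReal r a) := by
  rw [poissonMeasure_singleton]
  rfl

lemma skQ_nonneg {l1 l2 : ℝ} (h1 : 0 ≤ l1) (h2 : 0 ≤ l2) (a b : ℕ) : 0 ≤ skQ l1 l2 a b := by
  unfold skQ; positivity

lemma skQ_pos {l1 l2 : ℝ} (h1 : 0 < l1) (h2 : 0 < l2) (a b : ℕ) : 0 < skQ l1 l2 a b := by
  unfold skQ; positivity

lemma pois_mul {l1 l2 : ℝ} (h1 : 0 < l1) (h2 : 0 < l2) (a b : ℕ) :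
    poissonPMFReal l1.toNNReal a * poissonPMFReal l2.toNNReal b = skQ l1 l2 a b := by
  rw [poissonPMFReal, poissonPMFReal, Real.coe_toNNReal l1 h1.le, Real.coe_toNNReal l2 h2.le,
    skQ, neg_add, Real.exp_add]
  ring

lemma skp_eq {l1 l2 : ℝ} (h1 : 0 < l1) (h2 : 0 < l2) (n : ℤ) :
    skp l1 l2 n = ∑' j : ℕ, skQ l1 l2 (j + n.toNat) (j + (-n).toNat) := by
  rw [skp, sk_singleton]
  have hterm : ∀ j : ℕ, poissonMeasure l1.toNNReal {j + n.toNat} *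
      poissonMeasure l2.toNNReal {j + (-n).toNat} =
      ENNReal.ofReal (skQ l1 l2 (j + n.toNat) (j + (-n).toNat)) := by
    intro j
    rw [poisson_sing, poisson_sing, ← ENNReal.ofReal_mul poissonPMFReal_nonneg,
      pois_mul h1 h2]
  simp_rw [hterm]
  rw [ENNReal.tsum_toReal_eq (fun j => ENNReal.ofReal_ne_top)]
  congr 1; ext j
  rw [ENNReal.toReal_ofReal (skQ_nonneg h1.le h2.le _ _)]

lemma skp_summable {l1 l2 : ℝ} (h1 : 0 < l1) (h2 : 0 < l2) (n : ℤ) :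
    Summable (fun j : ℕ => skQ l1 l2 (j + n.toNat) (j + (-n).toNat)) := by
  have h := sk_singleton l1 l2 n
  have hfin : (∑' j : ℕ, (poissonMeasure l1.toNNReal {j + n.toNat} *
      poissonMeasure l2.toNNReal {j + (-n).toNat})) ≠ ∞ := by
    rw [← h]; exact measure_ne_top _ _
  have := ENNReal.summable_toReal hfin
  convert this using 2 with j
  rw [poisson_sing, poisson_sing, ← ENNReal.ofReal_mul poissonPMFReal_nonneg, pois_mul h1 h2,
    ENNReal.toReal_ofReal (skQ_nonneg h1.le h2.le _ _)]

lemma skp_pos {l1 l2 : ℝ} (h1 : 0 < l1) (h2 : 0 < l2) (n : ℤ) : 0 < skp l1 l2 n := by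
  rw [skp_eq h1 h2]
  exact Summable.tsum_pos (skp_summable h1 h2 n) (fun j => skQ_nonneg h1.le h2.le _ _) 0
    (skQ_pos h1 h2 _ _)

lemma skp_nonneg {l1 l2 : ℝ} (n : ℤ) : 0 ≤ skp l1 l2 n := ENNReal.toReal_nonneg

lemma skp_bessel {l1 l2 : ℝ} (h1 : 0 < l1) (h2 : 0 < l2) (n : ℤ) :
    skp l1 l2 n = rexp (-(l1 + l2)) * Real.sqrt (l1 / l2) ^ n *
      besselI n (2 * Real.sqrt (l1 * l2)) := by
  rw [skp_eq h1 h2, besselI, ← tsum_mul_left]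
  congr 1; ext j
  have hs1 : Real.sqrt l1 ^ 2 = l1 := Real.sq_sqrt h1.le
  have hs2 : Real.sqrt l2 ^ 2 = l2 := Real.sq_sqrt h2.le
  have hs1p : 0 < Real.sqrt l1 := Real.sqrt_pos.2 h1
  have hs2p : 0 < Real.sqrt l2 := Real.sqrt_pos.2 h2
  have hdiv : Real.sqrt (l1 / l2) = Real.sqrt l1 / Real.sqrt l2 := Real.sqrt_div h1.le l2
  have hmul : Real.sqrt (l1 * l2) = Real.sqrt l1 * Real.sqrt l2 := Real.sqrt_mul h1.le l2
  rw [skQ, hdiv, hmul]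
  rw [show 2 * (Real.sqrt l1 * Real.sqrt l2) / 2 = Real.sqrt l1 * Real.sqrt l2 by ring]
  set s1 := Real.sqrt l1 with hs1def
  set s2 := Real.sqrt l2 with hs2def
  clear_value s1 s2
  rw [← hs1, ← hs2]
  rcases le_or_gt 0 n with hn | hn
  · lift n to ℕ using hn with k
    rw [Int.toNat_natCast]
    rw [show ((-(k:ℤ)).toNat) = 0 by omega]
    rw [show (k:ℤ).natAbs = k by omega]
    rw [zpow_natCast, div_pow]
    field_simp
    ring
  · obtain ⟨k, rfl⟩ : ∃ k : ℕ, n = -(k : ℤ) := ⟨n.natAbs, by omega⟩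
    rw [show ((-(k:ℤ)).toNat) = 0 by omega, show ((-(-(k:ℤ))).toNat) = k by omega,
      show (-(k:ℤ)).natAbs = k by omega]
    rw [zpow_neg, zpow_natCast, div_pow, inv_div]
    field_simp
    ring

lemma skQ_swap (l1 l2 : ℝ) (a b : ℕ) : skQ l1 l2 a b = skQ l2 l1 b a := by
  unfold skQ; rw [add_comm l1 l2]; ring

lemma skp_swap {l1 l2 : ℝ} (h1 : 0 < l1) (h2 : 0 < l2) (n : ℤ) :
    skp l1 l2 n = skp l2 l1 (-n) := by
  rw [skp_eq h1 h2, skp_eq h2 h1, neg_neg]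
  congr 1; ext j; exact skQ_swap l1 l2 _ _

lemma skp_natCast {l1 l2 : ℝ} (h1 : 0 < l1) (h2 : 0 < l2) (k : ℕ) :
    skp l1 l2 (k : ℤ) = ∑' j : ℕ, skQ l1 l2 (j + k) j := by
  rw [skp_eq h1 h2]
  simp only [Int.toNat_natCast, show ((-(k:ℤ)).toNat) = 0 by omega, add_zero]

lemma skp_natCast_summable {l1 l2 : ℝ} (h1 : 0 < l1) (h2 : 0 < l2) (k : ℕ) :
    Summable (fun j : ℕ => skQ l1 l2 (j + k) j) := by
  have := skp_summable h1 h2 (k : ℤ)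
  simpa only [Int.toNat_natCast, show ((-(k:ℤ)).toNat) = 0 by omega, add_zero] using this

lemma skQ_l1 {l1 l2 : ℝ} (a b : ℕ) : l1 * skQ l1 l2 a b = ((a : ℝ) + 1) * skQ l1 l2 (a + 1) b := by
  unfold skQ
  rw [Nat.factorial_succ]
  have ha : (a.factorial : ℝ) ≠ 0 := Nat.cast_ne_zero.2 a.factorial_ne_zero
  have hb : (b.factorial : ℝ) ≠ 0 := Nat.cast_ne_zero.2 b.factorial_ne_zero
  push_cast
  field_simp
  ring

lemma skQ_l2 {l1 l2 : ℝ} (a b : ℕ) : l2 * skQ l1 l2 a b = ((b : ℝ) + 1) * skQ l1 l2 a (b + 1) := by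
  rw [skQ_swap l1 l2 a b, skQ_swap l1 l2 a (b+1)]
  exact skQ_l1 b a

lemma skp_rec_pos {l1 l2 : ℝ} (h1 : 0 < l1) (h2 : 0 < l2) (k : ℕ) :
    l1 * skp l1 l2 (k : ℤ) - l2 * skp l1 l2 ((k : ℤ) + 2) =
      ((k : ℝ) + 1) * skp l1 l2 ((k : ℤ) + 1) := by
  have e1 : ((k : ℤ) + 1) = ((k + 1 : ℕ) : ℤ) := by push_cast; ring
  have e2 : ((k : ℤ) + 2) = ((k + 2 : ℕ) : ℤ) := by push_cast; ring
  rw [e1, e2, skp_natCast h1 h2, skp_natCast h1 h2, skp_natCast h1 h2]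
  set h : ℕ → ℝ := fun j => (j : ℝ) * skQ l1 l2 (j + (k + 1)) j with hh
  have hA : ∀ j : ℕ, l1 * skQ l1 l2 (j + k) j = ((j : ℝ) + k + 1) * skQ l1 l2 (j + (k + 1)) j := by
    intro j
    rw [skQ_l1]
    push_cast
    ring_nf
  have hB : ∀ j : ℕ, l2 * skQ l1 l2 (j + (k + 2)) j = h (j + 1) := by
    intro j
    rw [skQ_l2, hh]
    push_cast
    ring_nf
  have hsum1 : Summable (fun j : ℕ => skQ l1 l2 (j + k) j) := skp_natCast_summable h1 h2 k
  have hsum2 : Summable (fun j : ℕ => skQ l1 l2 (j + (k + 1)) j) := skp_natCast_summable h1 h2 (k+1)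
  have hsum3 : Summable (fun j : ℕ => skQ l1 l2 (j + (k + 2)) j) := skp_natCast_summable h1 h2 (k+2)
  have hsumA : Summable (fun j : ℕ => ((j : ℝ) + k + 1) * skQ l1 l2 (j + (k + 1)) j) := by
    have := hsum1.mul_left l1
    simpa only [hA] using this
  have hsumh' : Summable (fun j : ℕ => h (j + 1)) := by
    have := hsum3.mul_left l2
    simpa only [hB] using this
  have hsumh : Summable h := (summable_nat_add_iff 1).mp hsumh'
  calc l1 * (∑' j : ℕ, skQ l1 l2 (j + k) j) - l2 * (∑' j : ℕ, skQ l1 l2 (j + (k + 2)) j)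
      = (∑' j : ℕ, ((j : ℝ) + k + 1) * skQ l1 l2 (j + (k + 1)) j) - ∑' j : ℕ, h j := by
        rw [← tsum_mul_left, ← tsum_mul_left]
        congr 1
        · exact tsum_congr hA
        · rw [Summable.tsum_eq_zero_add hsumh]
          simp only [hh, Nat.cast_zero, zero_mul, zero_add]
          exact tsum_congr hB
    _ = ∑' j : ℕ, (((j : ℝ) + k + 1) * skQ l1 l2 (j + (k + 1)) j - h j) := (Summable.tsum_sub hsumA hsumh).symm
    _ = ∑' j : ℕ, ((k : ℝ) + 1) * skQ l1 l2 (j + (k + 1)) j := by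
        congr 1; ext j; rw [hh]; ring
    _ = ((k : ℝ) + 1) * ∑' j : ℕ, skQ l1 l2 (j + (k + 1)) j := tsum_mul_left

lemma skp_rec_zero {l1 l2 : ℝ} (h1 : 0 < l1) (h2 : 0 < l2) :
    l1 * skp l1 l2 (-1) - l2 * skp l1 l2 1 = 0 := by
  have e1 : skp l1 l2 (-1) = ∑' j : ℕ, skQ l1 l2 j (j + 1) := by
    rw [skp_swap h1 h2, show -(-1 : ℤ) = ((1:ℕ):ℤ) by norm_num, skp_natCast h2 h1]
    exact tsum_congr fun j => skQ_swap l2 l1 (j+1) j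
  have e2 : skp l1 l2 1 = ∑' j : ℕ, skQ l1 l2 (j + 1) j := by
    rw [show (1 : ℤ) = ((1:ℕ):ℤ) by norm_num, skp_natCast h1 h2]
  rw [e1, e2, ← tsum_mul_left, ← tsum_mul_left, sub_eq_zero]
  exact tsum_congr fun j => by rw [skQ_l1, skQ_l2]

lemma skp_rec {l1 l2 : ℝ} (h1 : 0 < l1) (h2 : 0 < l2) (n : ℤ) :
    l1 * skp l1 l2 (n - 1) - l2 * skp l1 l2 (n + 1) = (n : ℝ) * skp l1 l2 n := by
  rcases lt_trichotomy n 0 with hn | rfl | hn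
  · obtain ⟨k, hk⟩ : ∃ k : ℕ, n = -((k : ℤ) + 1) := ⟨(-n-1).toNat, by omega⟩
    subst hk
    rw [skp_swap h1 h2 (-((k:ℤ)+1) - 1), skp_swap h1 h2 (-((k:ℤ)+1) + 1),
      skp_swap h1 h2 (-((k:ℤ)+1))]
    rw [show -(-((k:ℤ)+1) - 1) = (k : ℤ) + 2 by ring, show -(-((k:ℤ)+1) + 1) = (k : ℤ) by ring,
      show -(-((k:ℤ)+1)) = (k : ℤ) + 1 by ring]
    have := skp_rec_pos h2 h1 k
    push_cast
    linarith
  · rw [show (0:ℤ) - 1 = -1 by ring, show (0:ℤ) + 1 = 1 by ring]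
    rw [skp_rec_zero h1 h2]
    norm_num
  · obtain ⟨k, hk⟩ : ∃ k : ℕ, n = (k : ℤ) + 1 := ⟨(n-1).toNat, by omega⟩
    subst hk
    rw [show (k:ℤ) + 1 - 1 = (k:ℤ) by ring, show (k:ℤ) + 1 + 1 = (k:ℤ) + 2 by ring]
    have := skp_rec_pos h1 h2 k
    push_cast
    linarith

noncomputable def Fz (l1 l2 : ℝ) (j : ℤ) : ℝ := (skellamMeasure l1 l2 {k : ℤ | k ≤ j}).toReal

lemma Fz_nonneg (l1 l2 : ℝ) (j : ℤ) : 0 ≤ Fz l1 l2 j := ENNReal.toReal_nonneg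

lemma Fz_le_one (l1 l2 : ℝ) (j : ℤ) : Fz l1 l2 j ≤ 1 := by
  have h := prob_le_one (μ := skellamMeasure l1 l2) (s := {k : ℤ | k ≤ j})
  have := ENNReal.toReal_mono ENNReal.one_ne_top h
  simpa [Fz] using this

lemma Fz_step (l1 l2 : ℝ) (j : ℤ) : Fz l1 l2 j = Fz l1 l2 (j - 1) + skp l1 l2 j := by
  have hset : {k : ℤ | k ≤ j} = {k : ℤ | k ≤ j - 1} ∪ {j} := by
    ext k; simp only [Set.mem_setOf_eq, Set.mem_union, Set.mem_singleton_iff]; omega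
  have hdis : Disjoint {k : ℤ | k ≤ j - 1} ({j} : Set ℤ) := by
    simp only [Set.disjoint_singleton_right, Set.mem_setOf_eq]; omega
  rw [Fz, hset, measure_union hdis (measurableSet_singleton j),
    ENNReal.toReal_add (measure_ne_top _ _) (measure_ne_top _ _)]
  rfl

lemma Fz_mono (l1 l2 : ℝ) {j j' : ℤ} (h : j ≤ j') : Fz l1 l2 j ≤ Fz l1 l2 j' :=
  ENNReal.toReal_mono (measure_ne_top _ _) (measure_mono (fun k hk => le_trans hk h))

lemma tail_eq (l1 l2 : ℝ) (j : ℤ) :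
    (skellamMeasure l1 l2 {k : ℤ | j < k}).toReal = 1 - Fz l1 l2 j := by
  have hset : {k : ℤ | j < k} = {k : ℤ | k ≤ j}ᶜ := by
    ext k; simp only [Set.mem_setOf_eq, Set.mem_compl_iff]; omega
  have h := measure_add_measure_compl (μ := skellamMeasure l1 l2)
    (s := {k : ℤ | k ≤ j}) (MeasurableSet.of_discrete)
  have h2 : Fz l1 l2 j + (skellamMeasure l1 l2 {k : ℤ | k ≤ j}ᶜ).toReal = 1 := by
    rw [Fz, ← ENNReal.toReal_add (measure_ne_top _ _) (measure_ne_top _ _), h]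
    simp
  rw [hset]; linarith

lemma setx_eq (x : ℝ) :
    ({k : ℤ | (k : ℝ) ≤ x} : Set ℤ) = {k : ℤ | k ≤ ⌊x⌋} := by
  ext k; simp [Int.le_floor]

lemma setmin_eq (x : ℝ) (n : ℤ) :
    ({k : ℤ | (k : ℝ) ≤ min (n : ℝ) x} : Set ℤ) = {k : ℤ | k ≤ min n ⌊x⌋} := by
  ext k
  simp only [Set.mem_setOf_eq, le_min_iff, Int.le_floor, Int.cast_le]

lemma setmax_eq (x : ℝ) (n : ℤ) :
    ({k : ℤ | max (n : ℝ) x < (k : ℝ)} : Set ℤ) = {k : ℤ | max n ⌊x⌋ < k} := by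
  ext k
  simp only [Set.mem_setOf_eq, max_lt_iff, Int.floor_lt, Int.cast_lt]

lemma skp_le_tail (l1 l2 : ℝ) (n : ℤ) : skp l1 l2 n ≤ 1 - Fz l1 l2 (n - 1) := by
  rw [← tail_eq]
  exact ENNReal.toReal_mono (measure_ne_top _ _)
    (measure_mono (by intro k hk; simp at hk ⊢; omega))

lemma tail_tendsto (l1 l2 : ℝ) :
    Tendsto (fun j : ℤ => 1 - Fz l1 l2 j) atTop (𝓝 0) := by
  have h := tendsto_measure_iInter_atTop (μ := skellamMeasure l1 l2)
    (s := fun j : ℤ => {k : ℤ | j < k})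
    (fun j => (MeasurableSet.of_discrete).nullMeasurableSet)
    (fun j j' hj k hk => lt_of_le_of_lt hj hk)
    ⟨0, measure_ne_top _ _⟩
  have hempty : ⋂ j : ℤ, {k : ℤ | j < k} = ∅ := by
    ext k; simp only [Set.mem_iInter, Set.mem_setOf_eq, Set.mem_empty_iff_false, iff_false,
      not_forall, not_lt]
    exact ⟨k, le_refl k⟩
  rw [hempty, measure_empty] at h
  have h2 := (ENNReal.tendsto_toReal (by simp : (0:ℝ≥0∞) ≠ ⊤)).comp h
  simp only [Function.comp_def, ENNReal.toReal_zero] at h2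
  have : (fun j : ℤ => (skellamMeasure l1 l2 {k : ℤ | j < k}).toReal) =
      fun j : ℤ => 1 - Fz l1 l2 j := by
    ext j; exact tail_eq l1 l2 j
  rwa [this] at h2

lemma key_SG {l1 l2 : ℝ} (h1 : 0 < l1) (h2 : 0 < l2) (x : ℝ) (f : ℤ → ℝ)
    (hfb : ∃ C, ∀ k : ℤ, |f k| ≤ C)
    (hfsol : ∀ k : ℤ,
      l1 * f (k + 1) - (k : ℝ) * f k - l2 * f (k - 1) =
        (if (k : ℝ) ≤ x then 1 else 0)
          - (skellamMeasure l1 l2 {j : ℤ | (j : ℝ) ≤ x}).toReal) :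
    ∀ n : ℤ, l1 * skp l1 l2 n * f (n + 1) + l2 * skp l1 l2 (n + 1) * f n
      = Fz l1 l2 (min n ⌊x⌋) * (1 - Fz l1 l2 (max n ⌊x⌋)) := by
  obtain ⟨C, hC⟩ := hfb
  have hC0 : 0 ≤ C := le_trans (abs_nonneg _) (hC 0)
  set b := ⌊x⌋ with hb
  set S : ℤ → ℝ := fun n => l1 * skp l1 l2 n * f (n + 1) + l2 * skp l1 l2 (n + 1) * f n with hS
  set G : ℤ → ℝ := fun n => Fz l1 l2 (min n b) * (1 - Fz l1 l2 (max n b)) with hG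
  have hsol' : ∀ k : ℤ, l1 * f (k + 1) - (k : ℝ) * f k - l2 * f (k - 1) =
      (if k ≤ b then 1 else 0) - Fz l1 l2 b := by
    intro k
    have := hfsol k
    rwa [setx_eq, show ((if (k:ℝ) ≤ x then 1 else 0) : ℝ) = (if k ≤ b then 1 else 0) by
      rw [hb]; exact if_congr (Int.le_floor).symm rfl rfl] at this
  have hstep : ∀ n : ℤ, S n - S (n - 1) = G n - G (n - 1) := by
    intro n
    have hrec := skp_rec h1 h2 n
    have hsol := hsol' n
    have hL : S n - S (n - 1) = skp l1 l2 n * ((if n ≤ b then 1 else 0) - Fz l1 l2 b) := by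
      rw [hS]
      simp only [show n - 1 + 1 = n by ring]
      rw [← hsol]
      linear_combination (-(f n)) * hrec
    rw [hL]
    have hFs := Fz_step l1 l2 n
    rcases le_or_gt n b with hn | hn
    · rw [hG]
      simp only [min_eq_left hn, min_eq_left (show n - 1 ≤ b by omega),
        max_eq_right hn, max_eq_right (show n - 1 ≤ b by omega), if_pos hn]
      linear_combination (Fz l1 l2 b - 1) * hFs
    · rw [hG]
      simp only [min_eq_right hn.le, min_eq_right (show b ≤ n - 1 by omega),
        max_eq_left hn.le, max_eq_left (show b ≤ n - 1 by omega),
        if_neg (show ¬ n ≤ b by omega)]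
      linear_combination (Fz l1 l2 b) * hFs
  have hconst : ∀ n : ℤ, S n - G n = S 0 - G 0 := by
    intro n
    induction n using Int.induction_on with
    | zero => rfl
    | succ k ih =>
      have := hstep ((k : ℤ) + 1)
      rw [show ((k : ℤ) + 1 - 1) = (k : ℤ) by ring] at this
      linarith
    | pred k ih =>
      have := hstep (-(k : ℤ))
      linarith
  have htail := tail_tendsto l1 l2
  have htail' : Tendsto (fun n : ℤ => 1 - Fz l1 l2 (n - 1)) atTop (𝓝 0) := by
    have h := htail.comp (tendsto_atTop_add_const_right atTop (-1)
      (tendsto_id : Tendsto (fun n : ℤ => n) atTop atTop))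
    simpa only [Function.comp_def, id_eq, ← sub_eq_add_neg] using h
  set B : ℤ → ℝ := fun n => (l1 + l2) * C * (1 - Fz l1 l2 (n - 1)) + (1 - Fz l1 l2 n) with hB
  have hBlim : Tendsto B atTop (𝓝 0) := by
    have := ((htail'.const_mul ((l1 + l2) * C)).add htail)
    simpa using this
  have hbound : ∀ n : ℤ, b ≤ n → |S n - G n| ≤ B n := by
    intro n hn
    have e1 : skp l1 l2 n ≤ 1 - Fz l1 l2 (n - 1) := skp_le_tail l1 l2 n
    have e2 : skp l1 l2 (n + 1) ≤ 1 - Fz l1 l2 (n - 1) := by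
      have happ := skp_le_tail l1 l2 (n + 1)
      rw [show n + 1 - 1 = n by ring] at happ
      have := Fz_mono l1 l2 (show n - 1 ≤ n by omega)
      linarith
    have ht : 0 ≤ 1 - Fz l1 l2 (n - 1) := by linarith [Fz_le_one l1 l2 (n - 1)]
    have hSb : |S n| ≤ (l1 + l2) * C * (1 - Fz l1 l2 (n - 1)) := by
      rw [hS]
      refine le_trans (abs_add_le _ _) ?_
      have a1 : |l1 * skp l1 l2 n * f (n + 1)| ≤ l1 * (1 - Fz l1 l2 (n - 1)) * C := by
        rw [abs_mul, abs_mul, abs_of_pos h1, abs_of_nonneg (skp_nonneg _)]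
        exact mul_le_mul (mul_le_mul_of_nonneg_left e1 h1.le) (hC _) (abs_nonneg _)
          (mul_nonneg h1.le ht)
      have a2 : |l2 * skp l1 l2 (n + 1) * f n| ≤ l2 * (1 - Fz l1 l2 (n - 1)) * C := by
        rw [abs_mul, abs_mul, abs_of_pos h2, abs_of_nonneg (skp_nonneg _)]
        exact mul_le_mul (mul_le_mul_of_nonneg_left e2 h2.le) (hC _) (abs_nonneg _)
          (mul_nonneg h2.le ht)
      nlinarith [a1, a2]
    have hGb : |G n| ≤ 1 - Fz l1 l2 n := by
      rw [hG]
      simp only [min_eq_right hn, max_eq_left hn]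
      have hn1 : 0 ≤ 1 - Fz l1 l2 n := by linarith [Fz_le_one l1 l2 n]
      rw [abs_of_nonneg (mul_nonneg (Fz_nonneg l1 l2 b) hn1)]
      nlinarith [Fz_le_one l1 l2 b, Fz_nonneg l1 l2 b]
    calc |S n - G n| ≤ |S n| + |G n| := abs_sub _ _
      _ ≤ (l1 + l2) * C * (1 - Fz l1 l2 (n - 1)) + (1 - Fz l1 l2 n) := add_le_add hSb hGb
      _ = B n := by rw [hB]
  have hSG : Tendsto (fun n : ℤ => S n - G n) atTop (𝓝 0) := by
    refine squeeze_zero_norm' ?_ hBlim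
    exact eventually_atTop.2 ⟨b, fun n hn => hbound n hn⟩
  have h0 : S 0 - G 0 = 0 := by
    refine tendsto_nhds_unique ?_ hSG
    rw [show (fun n : ℤ => S n - G n) = fun _ => S 0 - G 0 from funext hconst]
    exact tendsto_const_nhds
  intro n
  have hcn := hconst n
  rw [h0] at hcn
  have hfin : S n = G n := by linarith
  rw [hS, hG] at hfin
  simpa using hfin

/-- Closed-form expression for bounded solutions of the Skellam Stein
equation, in terms of modified Bessel functions of the first kind. -/
lemma besselI_pos {l1 l2 : ℝ} (h1 : 0 < l1) (h2 : 0 < l2) (n : ℤ) :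
    0 < besselI n (2 * Real.sqrt (l1 * l2)) := by
  have hp := skp_pos h1 h2 n
  rw [skp_bessel h1 h2] at hp
  have hEt : 0 < rexp (-(l1 + l2)) * Real.sqrt (l1 / l2) ^ n := by
    have : 0 < Real.sqrt (l1 / l2) := Real.sqrt_pos.2 (by positivity)
    positivity
  rcases mul_pos_iff.mp hp with ⟨_, h⟩ | ⟨h, _⟩
  · exact h
  · linarith

lemma tele (g T : ℤ → ℝ) (hg : ∀ n : ℤ, g (n + 1) - g n = T n) :
    ∀ c m : ℤ, c ≤ m → g m - g c = ∑ n ∈ Finset.Icc c (m - 1), T n := by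
  intro c m hcm
  refine Int.le_induction (motive := fun n _ => g n - g c = ∑ k ∈ Finset.Icc c (n - 1), T k) ?_ ?_ m hcm
  · show g c - g c = ∑ k ∈ Finset.Icc c (c - 1), T k
    rw [Finset.Icc_eq_empty (by omega)]
    simp
  · intro n hn ih
    have hins : Finset.Icc c (n + 1 - 1) = insert n (Finset.Icc c (n - 1)) := by
      ext j; simp only [Finset.mem_Icc, Finset.mem_insert]; omega
    rw [hins, Finset.sum_insert (by simp only [Finset.mem_Icc]; omega), ← ih]
    have := hg n
    linarith

theorem stmt_5 (l1 l2 : ℝ) (hl1 : 0 < l1) (hl2 : 0 < l2) (x : ℝ)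
    (z : ℝ) (hz : z = 2 * Real.sqrt (l1 * l2))
    (f : ℤ → ℝ) (hfb : ∃ C, ∀ k : ℤ, |f k| ≤ C)
    (hfsol : ∀ k : ℤ,
      l1 * f (k + 1) - (k : ℝ) * f k - l2 * f (k - 1) =
        (if (k : ℝ) ≤ x then 1 else 0)
          - (skellamMeasure l1 l2 {j : ℤ | (j : ℝ) ≤ x}).toReal)
    (c m : ℤ) :
    (m > c →
      f m = (-1 : ℝ) ^ m * (Real.sqrt (l2 / l1)) ^ m * besselI m z *
        ((-1 : ℝ) ^ c * (Real.sqrt (l1 / l2)) ^ c * (besselI c z)⁻¹ * f c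
          + Real.exp (l1 + l2) / Real.sqrt (l1 * l2) *
            ∑ n ∈ Finset.Icc c (m - 1),
              (-1 : ℝ) ^ (n + 1) / (besselI n z * besselI (n + 1) z) *
                (skellamMeasure l1 l2 {k : ℤ | (k : ℝ) ≤ min (n : ℝ) x}).toReal *
                (skellamMeasure l1 l2 {k : ℤ | max (n : ℝ) x < (k : ℝ)}).toReal))
    ∧
    (m < c →
      f m = (-1 : ℝ) ^ m * (Real.sqrt (l2 / l1)) ^ m * besselI m z *
        ((-1 : ℝ) ^ c * (Real.sqrt (l1 / l2)) ^ c * (besselI c z)⁻¹ * f c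
          - Real.exp (l1 + l2) / Real.sqrt (l1 * l2) *
            ∑ n ∈ Finset.Icc m (c - 1),
              (-1 : ℝ) ^ (n + 1) / (besselI n z * besselI (n + 1) z) *
                (skellamMeasure l1 l2 {k : ℤ | (k : ℝ) ≤ min (n : ℝ) x}).toReal *
                (skellamMeasure l1 l2 {k : ℤ | max (n : ℝ) x < (k : ℝ)}).toReal)) := by
  subst hz
  set z := 2 * Real.sqrt (l1 * l2) with hz
  set b := ⌊x⌋ with hb
  set E := rexp (-(l1 + l2)) with hE
  set t := Real.sqrt (l1 / l2) with ht
  have hs1 : 0 < Real.sqrt l1 := Real.sqrt_pos.2 hl1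
  have hs2 : 0 < Real.sqrt l2 := Real.sqrt_pos.2 hl2
  have htpos : 0 < t := Real.sqrt_pos.2 (by positivity)
  have hEpos : 0 < E := Real.exp_pos _
  have hsq : Real.sqrt (l1 * l2) = Real.sqrt l1 * Real.sqrt l2 := Real.sqrt_mul hl1.le l2
  have htt : t = Real.sqrt l1 / Real.sqrt l2 := by rw [ht, Real.sqrt_div hl1.le]
  have hl1' : l1 = Real.sqrt (l1 * l2) * t := by
    rw [hsq, htt,
      show Real.sqrt l1 * Real.sqrt l2 * (Real.sqrt l1 / Real.sqrt l2) =
        Real.sqrt l1 * Real.sqrt l1 * (Real.sqrt l2 / Real.sqrt l2) from by ring,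
      div_self hs2.ne', mul_one, Real.mul_self_sqrt hl1.le]
  have hl2' : l2 * t = Real.sqrt (l1 * l2) := by
    rw [hsq, htt,
      show l2 * (Real.sqrt l1 / Real.sqrt l2) = Real.sqrt l1 * (l2 / Real.sqrt l2) from by ring,
      Real.div_sqrt]
  have hI : ∀ n : ℤ, 0 < besselI n z := fun n => besselI_pos hl1 hl2 n
  have hsqpos : 0 < Real.sqrt (l1 * l2) := by positivity
  -- inverse sqrt relation
  have hinv : Real.sqrt (l2 / l1) = t⁻¹ := by
    rw [ht, ← Real.sqrt_inv, inv_div]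
  -- key identity
  have hkey := key_SG hl1 hl2 x f hfb hfsol
  -- g function
  set g : ℤ → ℝ := fun n => (-1 : ℝ) ^ n * t ^ n * f n / besselI n z with hg
  -- statement summand equals clean form
  have hTs : ∀ n : ℤ,
      (-1 : ℝ) ^ (n + 1) / (besselI n z * besselI (n + 1) z) *
        (skellamMeasure l1 l2 {k : ℤ | (k : ℝ) ≤ min (n : ℝ) x}).toReal *
        (skellamMeasure l1 l2 {k : ℤ | max (n : ℝ) x < (k : ℝ)}).toReal =
      (-1 : ℝ) ^ (n + 1) / (besselI n z * besselI (n + 1) z) *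
        Fz l1 l2 (min n b) * (1 - Fz l1 l2 (max n b)) := by
    intro n
    rw [setmin_eq, setmax_eq, tail_eq]
    rfl
  -- one-step identity for g
  have hgstep : ∀ n : ℤ, g (n + 1) - g n =
      Real.exp (l1 + l2) / Real.sqrt (l1 * l2) *
        ((-1 : ℝ) ^ (n + 1) / (besselI n z * besselI (n + 1) z) *
          Fz l1 l2 (min n b) * (1 - Fz l1 l2 (max n b))) := by
    intro n
    have hk := hkey n
    rw [skp_bessel hl1 hl2 n, skp_bessel hl1 hl2 (n + 1)] at hk
    have htn1 : t ^ (n + 1) = t ^ n * t := zpow_add_one₀ htpos.ne' n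
    rw [htn1] at hk
    have hk2 : Real.sqrt (l1 * l2) * E * t ^ n *
        (t * besselI n z * f (n + 1) + besselI (n + 1) z * f n) =
        Fz l1 l2 (min n b) * (1 - Fz l1 l2 (max n b)) := by
      linear_combination hk + (-(E * t ^ n * besselI n z * f (n + 1))) * hl1'
        + (-(E * t ^ n * besselI (n + 1) z * f n)) * hl2'
    have hexp : Real.exp (l1 + l2) = E⁻¹ := by
      rw [hE, ← Real.exp_neg, neg_neg]
    have hmn1 : (-1 : ℝ) ^ (n + 1) = (-1) ^ n * (-1) := zpow_add_one₀ (by norm_num) n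
    rw [hg]
    simp only
    rw [hexp, htn1, hmn1]
    have hIn := (hI n).ne'
    have hIn1 := (hI (n + 1)).ne'
    have htn : (0:ℝ) < t ^ n := zpow_pos htpos n
    rw [hsq] at hk2 ⊢
    rw [mul_assoc ((-1 : ℝ) ^ n * -1 / (besselI n z * besselI (n + 1) z)), ← hk2]
    field_simp
    ring
  -- final assembly
  have hIm := (hI m).ne'
  have hsgn : ((-1 : ℝ) ^ m) * ((-1 : ℝ) ^ m) = 1 := by
    rw [← mul_zpow]; norm_num
  have htm : ((t⁻¹) ^ m) * (t ^ m) = 1 := by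
    rw [← mul_zpow, inv_mul_cancel₀ htpos.ne', one_zpow]
  have hfm : ∀ w : ℝ, w = g m → f m = (-1 : ℝ) ^ m * (t⁻¹) ^ m * besselI m z * w := by
    rintro w rfl
    simp only [hg]
    rw [show (-1 : ℝ) ^ m * (t⁻¹) ^ m * besselI m z * ((-1 : ℝ) ^ m * t ^ m * f m / besselI m z)
        = ((-1 : ℝ) ^ m * (-1 : ℝ) ^ m) * ((t⁻¹) ^ m * t ^ m) * f m * (besselI m z / besselI m z)
        by ring, hsgn, htm, div_self hIm]
    ring
  constructor
  · intro hmc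
    have htel := tele g _ hgstep c m hmc.le
    rw [hinv]
    rw [show (∑ n ∈ Finset.Icc c (m - 1),
        (-1 : ℝ) ^ (n + 1) / (besselI n z * besselI (n + 1) z) *
          (skellamMeasure l1 l2 {k : ℤ | (k : ℝ) ≤ min (n : ℝ) x}).toReal *
          (skellamMeasure l1 l2 {k : ℤ | max (n : ℝ) x < (k : ℝ)}).toReal) =
        ∑ n ∈ Finset.Icc c (m - 1),
          (-1 : ℝ) ^ (n + 1) / (besselI n z * besselI (n + 1) z) *
            Fz l1 l2 (min n b) * (1 - Fz l1 l2 (max n b))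
      from Finset.sum_congr rfl (fun n _ => hTs n)]
    apply hfm
    rw [Finset.mul_sum] at *
    rw [htel.symm]
    simp only [hg]
    ring
  · intro hmc
    have htel := tele g _ hgstep m c hmc.le
    rw [hinv]
    rw [show (∑ n ∈ Finset.Icc m (c - 1),
        (-1 : ℝ) ^ (n + 1) / (besselI n z * besselI (n + 1) z) *
          (skellamMeasure l1 l2 {k : ℤ | (k : ℝ) ≤ min (n : ℝ) x}).toReal *
          (skellamMeasure l1 l2 {k : ℤ | max (n : ℝ) x < (k : ℝ)}).toReal) =
        ∑ n ∈ Finset.Icc m (c - 1),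
          (-1 : ℝ) ^ (n + 1) / (besselI n z * besselI (n + 1) z) *
            Fz l1 l2 (min n b) * (1 - Fz l1 l2 (max n b))
      from Finset.sum_congr rfl (fun n _ => hTs n)]
    apply hfm
    rw [Finset.mul_sum] at *
    rw [← htel]
    simp only [hg]
    ring
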